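/- arXiv:1110.0189 — 2 statements merged into one kernel-verified Lean document; each statement's English description precedes it below -/
import Mathlib

section
/- Define φ on binary words by φ(1^{m_0} 2^{n_0} 1^{m_1} 2^{n_1} ⋯ 1^{m_{d−1}} 2^{n_{d−1}} 1^{m_d} 2^{n_d}) = 1^{m_d−1} 2^{n_0} 1^{m_{d−1}} 2^{n_1} ⋯ 2^{n_{d−2}} 1^{m_1} 2^{n_{d−1}} 1^{m_0+1} 2^{n_d}. Then φ is an involution on the set of binary words on {1,2} (with φ applied to words whose decomposition has m_d ≥ 1). -/
/-- Count the leading letters of a list equal to `a`; return the count and the rest. -/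
def leadCount (a : ℕ) : List ℕ → ℕ × List ℕ
  | [] => (0, [])
  | b :: rest =>
    if b = a then
      let p := leadCount a rest
      (p.1 + 1, p.2)
    else (0, b :: rest)

def blocksAux : ℕ → List ℕ → List (ℕ × ℕ)
  | 0, _ => []
  | _, [] => []
  | fuel + 1, w =>
    let p := leadCount 1 w
    let q := leadCount 2 p.2
    (p.1, q.1) :: blocksAux fuel q.2

/-- The descent-block decomposition `[(m₀,n₀),…,(m_d,n_d)]` of a binary word
`1^{m₀} 2^{n₀} ⋯ 1^{m_d} 2^{n_d}`. -/
def blocks (w : List ℕ) : List (ℕ × ℕ) := blocksAux w.length w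

/-- The word `1^{m₀} 2^{n₀} ⋯ 1^{m_d} 2^{n_d}` determined by blocks. -/
def blockWord (bs : List (ℕ × ℕ)) : List ℕ :=
  bs.flatMap fun p => List.replicate p.1 1 ++ List.replicate p.2 2

/-- `[(m₀,n₀),…,(m_d,n_d)]` is a valid descent-block decomposition:
`m_i > 0` for `1 ≤ i ≤ d` and `n_j > 0` for `0 ≤ j ≤ d-1`. -/
def ValidBlocks (bs : List (ℕ × ℕ)) : Prop :=
  bs ≠ [] ∧ (∀ p ∈ bs.tail, 0 < p.1) ∧ (∀ p ∈ bs.dropLast, 0 < p.2)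

/-- A word on the alphabet {1,2}. -/
def IsBinary (w : List ℕ) : Prop := ∀ a ∈ w, a = 1 ∨ a = 2

/-- The descent number of a word. -/
def des (w : List ℕ) : ℕ := (w.zip w.tail).countP fun p => decide (p.2 < p.1)

/-- The excedance number of a binary word with `k` ones: the number of
positions `i ≤ k` carrying the letter 2. -/
def exc (w : List ℕ) : ℕ := (w.take (w.count 1)).count 2

/-- `Ψ = Φ₁⁻¹` on binary words, via the descent-block decomposition. -/
def psiBlocks (bs : List (ℕ × ℕ)) : List ℕ :=
  List.replicate (bs.headD (0,0)).1 1
    ++ bs.tail.flatMap (fun p => 2 :: List.replicate (p.1 - 1) 1)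
    ++ bs.dropLast.flatMap (fun p => List.replicate (p.2 - 1) 2 ++ [1])
    ++ List.replicate (bs.getLastD (0,0)).2 2

def Psi (w : List ℕ) : List ℕ := psiBlocks (blocks w)

/-- Foata's second fundamental transformation on binary words. -/
def phi2Blocks (bs : List (ℕ × ℕ)) : List ℕ :=
  bs.tail.reverse.flatMap (fun p => List.replicate (p.1 - 1) 1 ++ [2])
    ++ List.replicate (bs.headD (0,0)).1 1
    ++ bs.dropLast.flatMap (fun p => List.replicate (p.2 - 1) 2 ++ [1])
    ++ List.replicate (bs.getLastD (0,0)).2 2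

def Phi2 (w : List ℕ) : List ℕ := phi2Blocks (blocks w)

/-- The extended Steingrímsson map `Γ` on binary words. -/
def gammaBlocks (bs : List (ℕ × ℕ)) : List ℕ :=
  match bs with
  | [] => []
  | [(m0, n0)] => List.replicate m0 1 ++ List.replicate n0 2
  | (m0, n0) :: rest =>
      List.replicate m0 1
        ++ rest.dropLast.flatMap (fun p => 2 :: List.replicate (p.1 - 1) 1)
        ++ (2 :: List.replicate (rest.getLastD (0,0)).1 1)
        ++ (let ns := n0 :: rest.map Prod.snd
            ns.dropLast.dropLast.flatMap (fun nj => List.replicate (nj - 1) 2 ++ [1])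
              ++ List.replicate (ns.dropLast.getLastD 0 - 1 + ns.getLastD 0) 2)

def Gamma (w : List ℕ) : List ℕ := gammaBlocks (blocks w)

/-- The involution `φ` on binary words. -/
def phi (w : List ℕ) : List ℕ :=
  let bs := blocks w
  let ns := bs.map Prod.snd
  let newms : List ℕ :=
    match (bs.map Prod.fst).reverse with
    | [] => []
    | [a] => [a]
    | a :: rest => (a - 1) :: (rest.dropLast ++ [rest.getLastD 0 + 1])
  blockWord (newms.zip ns)

/-- Fibonacci words: binary words with no two consecutive ones. -/
def IsFib (w : List ℕ) : Prop :=
  IsBinary w ∧ w.Chain' fun a b => ¬(a = 1 ∧ b = 1)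

def FibSet (n : ℕ) : Set (List ℕ) := {w | IsFib w ∧ w.length = n}

/-- Fibonacci words of length `n` ending with the letter 1. -/
def FibSet' (n : ℕ) : Set (List ℕ) :=
  {w | IsFib w ∧ w.length = n ∧ w.getLast? = some 1}

/-- Binary words of length `n` with no two consecutive twos. -/
def GSet (n : ℕ) : Set (List ℕ) :=
  {w | IsBinary w ∧ w.length = n ∧ w.Chain' fun a b => ¬(a = 2 ∧ b = 2)}

/-- The word `1^{m₀} 2^{d+n₀-1} 1 2^{n₁-1} ⋯ 1 2^{n_{d-1}-1} 1 2^{n_d}`. -/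
def Rword (m0 : ℕ) (ns : List ℕ) : List ℕ :=
  match ns with
  | [] => List.replicate m0 1
  | [n0] => List.replicate m0 1 ++ List.replicate n0 2
  | n0 :: rest =>
      List.replicate m0 1 ++ List.replicate (rest.length + n0 - 1) 2
        ++ rest.dropLast.flatMap (fun nj => 1 :: List.replicate (nj - 1) 2)
        ++ (1 :: List.replicate (rest.getLastD 0) 2)

def RSet (n : ℕ) : Set (List ℕ) :=
  {w | ∃ m0 ns, m0 ≤ 1 ∧ ns ≠ [] ∧ (∀ j ∈ List.dropLast ns, 1 ≤ j) ∧
        w = Rword m0 ns ∧ w.length = n}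

/-- The Fibonacci word `1^{m₀} 2^{n₀} 1 2^{n₁} ⋯ 1 2^{n_d}`. -/
def Fword (m0 : ℕ) (ns : List ℕ) : List ℕ :=
  List.replicate m0 1 ++ List.replicate (ns.headD 0) 2
    ++ ns.tail.flatMap fun nj => 1 :: List.replicate nj 2
lemma leadCount_spec (a : ℕ) (w : List ℕ) :
    w = List.replicate (leadCount a w).1 a ++ (leadCount a w).2 ∧
    (∀ h, (leadCount a w).2.head? = some h → h ≠ a) ∧
    (leadCount a w).2.Sublist w := by
  induction w with
  | nil => simp [leadCount]
  | cons b t ih =>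
    by_cases hb : b = a
    · subst hb
      simp only [leadCount, if_pos rfl]
      refine ⟨?_, ih.2.1, ih.2.2.trans (List.sublist_cons_self ..)⟩
      conv_lhs => rw [ih.1]
      simp [List.replicate_succ]
    · simp only [leadCount, if_neg hb]
      refine ⟨by simp, ?_, List.Sublist.refl _⟩
      intro h hh
      simp at hh
      omega

lemma leadCount_pos (a : ℕ) (w : List ℕ) (h : w.head? = some a) : 0 < (leadCount a w).1 := by
  rcases Nat.eq_zero_or_pos (leadCount a w).1 with h0 | h1
  · exfalso
    have := (leadCount_spec a w).1
    rw [h0] at this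
    simp at this
    exact (leadCount_spec a w).2.1 a (this ▸ h) rfl
  · exact h1

lemma blocksAux_nil (fuel : ℕ) : blocksAux fuel [] = [] := by cases fuel <;> rfl

lemma blocksAux_cons (fuel : ℕ) (b : ℕ) (t : List ℕ) :
    blocksAux (fuel+1) (b::t) =
      ((leadCount 1 (b::t)).1, (leadCount 2 (leadCount 1 (b::t)).2).1)
        :: blocksAux fuel (leadCount 2 (leadCount 1 (b::t)).2).2 := rfl

lemma blockWord_cons (p : ℕ × ℕ) (l : List (ℕ × ℕ)) :
    blockWord (p :: l) = List.replicate p.1 1 ++ List.replicate p.2 2 ++ blockWord l := by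
  simp [blockWord]

lemma blockWord_nil : blockWord [] = [] := rfl

lemma leadCount_replicate_append (a k : ℕ) (t : List ℕ)
    (ht : ∀ h, t.head? = some h → h ≠ a) :
    leadCount a (List.replicate k a ++ t) = (k, t) := by
  induction k with
  | zero =>
    simp only [List.replicate_zero, List.nil_append]
    cases t with
    | nil => rfl
    | cons b t' =>
      have : b ≠ a := ht b rfl
      simp [leadCount, this]
  | succ k ih => simp [List.replicate_succ, leadCount, ih]

lemma blocksAux_spec : ∀ fuel w, IsBinary w → w.length ≤ fuel →
    blockWord (blocksAux fuel w) = w ∧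
    (∀ p ∈ (blocksAux fuel w).tail, 0 < p.1) ∧
    (∀ p ∈ (blocksAux fuel w).dropLast, 0 < p.2) ∧
    ((0,0) ∉ blocksAux fuel w) ∧
    (∀ hp, (blocksAux fuel w).head? = some hp → w.head? = some 1 → 0 < hp.1) := by
  intro fuel
  induction fuel with
  | zero =>
    intro w _ hlen
    have : w = [] := List.eq_nil_of_length_eq_zero (Nat.le_zero.mp hlen)
    subst this
    simp [blocksAux_nil, blockWord_nil]
  | succ fuel ih =>
    intro w hbin hlen
    cases w with
    | nil => simp [blocksAux_nil, blockWord_nil]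
    | cons b t =>
      set w := b :: t with hw
      obtain ⟨hP1, hP2, hP3⟩ := leadCount_spec 1 w
      set P := leadCount 1 w with hPdef
      obtain ⟨hQ1, hQ2, hQ3⟩ := leadCount_spec 2 P.2
      set Q := leadCount 2 P.2 with hQdef
      -- Q.2 is binary
      have hbinQ : IsBinary Q.2 := fun x hx => hbin x ((hQ3.trans hP3).mem hx)
      -- head of Q.2 is 1 if nonempty
      have hQhead : ∀ h, Q.2.head? = some h → h = 1 := by
        intro h hh
        have hmem : h ∈ Q.2 := List.mem_of_mem_head? hh
        rcases hbinQ h hmem with h1 | h2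
        · exact h1
        · exact absurd h2 (by have := hQ2 h hh; omega)
      -- length bookkeeping
      have hlenw : w.length = P.1 + Q.1 + Q.2.length := by
        conv_lhs => rw [hP1]
        rw [hQ1] at hP1 ⊢
        simp [List.length_append]
        ring
      have hpos : 0 < P.1 + Q.1 := by
        rcases hbin b (by simp [hw]) with hb | hb
        · have : 0 < P.1 := leadCount_pos 1 w (by simp [hw, hb])
          omega
        · rcases Nat.eq_zero_or_pos P.1 with h0 | h1
          · have hP2w : P.2 = w := by
              conv_rhs => rw [hP1]; rw [h0]; simp
            have : 0 < Q.1 := leadCount_pos 2 P.2 (by rw [hP2w]; simp [hw, hb])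
            omega
          · omega
      have hlenQ : Q.2.length ≤ fuel := by omega
      obtain ⟨ih1, ih2, ih3, ih4, ih5⟩ := ih Q.2 hbinQ hlenQ
      set L := blocksAux fuel Q.2 with hLdef
      have heq : blocksAux (fuel+1) w = (P.1, Q.1) :: L := blocksAux_cons fuel b t
      rw [heq]
      have hLne_of : Q.2 ≠ [] → ∀ p ∈ L, 0 < p.1 := by
        intro hne p hp
        cases hL : L with
        | nil => rw [hL] at hp; simp at hp
        | cons a l =>
          rw [hL] at hp
          rcases List.mem_cons.mp hp with rfl | hpl
          · refine ih5 p (by rw [hL]; rfl) ?_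
            cases hQ2' : Q.2 with
            | nil => exact absurd hQ2' hne
            | cons x xs =>
              have : x = 1 := hQhead x (by rw [hQ2']; rfl)
              simp [hQ2', this]
          · exact ih2 p (by rw [hL]; exact hpl)
      have hQ2ne_of : L ≠ [] → Q.2 ≠ [] := by
        intro hne hq
        rw [hLdef, hq, blocksAux_nil] at hne
        exact hne rfl
      refine ⟨?_, ?_, ?_, ?_, ?_⟩
      · rw [blockWord_cons]
        simp only [ih1]
        conv_rhs => rw [hP1]
        rw [hQ1]
        simp
      · intro p hp
        exact hLne_of (hQ2ne_of (List.ne_nil_of_mem hp)) p hp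
      · cases hL : L with
        | nil => simp
        | cons a l =>
          have hQ2ne : Q.2 ≠ [] := hQ2ne_of (by rw [hL]; simp)
          have hP2ne : P.2 ≠ [] := by
            intro h
            have hnil : List.replicate Q.1 2 ++ Q.2 = [] := by rw [← hQ1]; exact h
            simp only [List.append_eq_nil_iff] at hnil
            exact hQ2ne hnil.2
          have hQ1pos : 0 < Q.1 := by
            apply leadCount_pos 2 P.2
            cases hP2' : P.2 with
            | nil => exact absurd hP2' hP2ne
            | cons x xs =>
              have hx2 : x = 2 := by
                have hmem : x ∈ P.2 := by rw [hP2']; simp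
                rcases hbin x (hP3.mem hmem) with h1 | h2
                · exact absurd h1 (hP2 x (by rw [hP2']; rfl))
                · exact h2
              simp [hP2', hx2]
          rw [← hL]
          have : ((P.1, Q.1) :: L).dropLast = (P.1, Q.1) :: L.dropLast := by
            rw [hL]; rfl
          rw [this]
          intro p hp
          rcases List.mem_cons.mp hp with rfl | hpl
          · exact hQ1pos
          · exact ih3 p hpl
      · intro hmem
        rcases List.mem_cons.mp hmem with h | h
        · have : P.1 = 0 ∧ Q.1 = 0 := by
            constructor <;> [exact congrArg Prod.fst h.symm; exact congrArg Prod.snd h.symm]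
          omega
        · exact ih4 h
      · intro hp hhp hw1
        simp at hhp
        subst hhp
        have : b = 1 := by simpa [hw] using hw1
        have : 0 < P.1 := leadCount_pos 1 w (by simp [hw, this])
        simpa using this

lemma blocksAux_blockWord : ∀ bs fuel, (blockWord bs).length ≤ fuel →
    (∀ p ∈ bs.tail, 0 < p.1) → (∀ p ∈ bs.dropLast, 0 < p.2) → ((0,0) : ℕ × ℕ) ∉ bs →
    blocksAux fuel (blockWord bs) = bs := by
  intro bs
  induction bs with
  | nil => intro fuel _ _ _ _; simp [blockWord_nil, blocksAux_nil]
  | cons p rest ih =>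
    intro fuel hlen htail hdrop hmem
    obtain ⟨m, n⟩ := p
    have hmn : 0 < m + n := by
      rcases Nat.eq_zero_or_pos (m + n) with h0 | h1
      · exfalso
        have hm0 : m = 0 ∧ n = 0 := by omega
        exact hmem (by rw [hm0.1, hm0.2]; exact List.mem_cons_self)
      · exact h1
    rw [blockWord_cons] at hlen ⊢
    simp only at hlen ⊢
    -- rest = [] → n = 0 allowed; rest ≠ [] → n > 0
    have hrest_n : rest ≠ [] → 0 < n := by
      intro hne
      have : ((m,n) : ℕ × ℕ) ∈ ((m,n) :: rest).dropLast := by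
        cases rest with
        | nil => exact absurd rfl hne
        | cons a l => simp
      exact hdrop _ this
    -- head of blockWord rest is 1 or none
    have hbwr : ∀ h, (blockWord rest).head? = some h → h ≠ 2 := by
      intro h hh
      cases rest with
      | nil => simp [blockWord_nil] at hh
      | cons q l =>
        have hq : 0 < q.1 := htail q (by simp)
        rw [blockWord_cons] at hh
        cases hm : q.1 with
        | zero => omega
        | succ k =>
          rw [hm, List.replicate_succ] at hh
          simp at hh
          omega
    -- the tail after the leading 1s
    have ht2 : ∀ h, (List.replicate n 2 ++ blockWord rest).head? = some h → h ≠ 1 := by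
      intro h hh
      cases hn : n with
      | zero =>
        have hre : rest = [] := by
          by_contra hne
          exact absurd hn (by have := hrest_n hne; omega)
        rw [hn, hre, blockWord_nil] at hh
        simp at hh
      | succ k =>
        rw [hn, List.replicate_succ] at hh
        simp at hh
        omega
    have hword : List.replicate m 1 ++ (List.replicate n 2 ++ blockWord rest) ≠ [] := by
      cases rest with
      | nil => simp; omega
      | cons q l =>
        have : 0 < n := hrest_n (by simp)
        simp
        omega
    obtain ⟨b, t, hbt⟩ := List.exists_cons_of_ne_nil hword
    obtain ⟨f, hf⟩ : ∃ f, fuel = f + 1 := by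
      have : 0 < fuel := by
        have hlb : 0 < m + n + (blockWord rest).length := by omega
        simp [List.length_append] at hlen
        omega
      exact ⟨fuel - 1, by omega⟩
    rw [List.append_assoc, hbt, hf, blocksAux_cons, ← hbt]
    have h1 : leadCount 1 (List.replicate m 1 ++ (List.replicate n 2 ++ blockWord rest))
        = (m, List.replicate n 2 ++ blockWord rest) := leadCount_replicate_append 1 m _ ht2
    have h2 : leadCount 2 (List.replicate n 2 ++ blockWord rest)
        = (n, blockWord rest) := leadCount_replicate_append 2 n _ hbwr
    rw [h1]
    simp only [h2]
    congr 1
    apply ih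
    · simp only [List.length_append, List.length_replicate] at hlen
      omega
    · intro q hq
      exact htail q (by simpa using List.tail_subset rest hq)
    · intro q hq
      cases rest with
      | nil => simp at hq
      | cons r l =>
        apply hdrop
        rw [List.dropLast_cons₂]
        exact List.mem_cons_of_mem _ hq
    · intro h
      exact hmem (List.mem_cons_of_mem _ h)

lemma blocks_spec (w : List ℕ) (hw : IsBinary w) :
    blockWord (blocks w) = w ∧ (∀ p ∈ (blocks w).tail, 0 < p.1) ∧
    (∀ p ∈ (blocks w).dropLast, 0 < p.2) ∧ ((0,0) : ℕ × ℕ) ∉ blocks w := by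
  have h := blocksAux_spec w.length w hw le_rfl
  exact ⟨h.1, h.2.1, h.2.2.1, h.2.2.2.1⟩

lemma blocks_blockWord (bs : List (ℕ × ℕ)) (h1 : ∀ p ∈ bs.tail, 0 < p.1)
    (h2 : ∀ p ∈ bs.dropLast, 0 < p.2) (h3 : ((0,0) : ℕ × ℕ) ∉ bs) :
    blocks (blockWord bs) = bs :=
  blocksAux_blockWord bs _ le_rfl h1 h2 h3

def T (l : List ℕ) : List ℕ :=
  match l with
  | [] => []
  | [a] => [a]
  | a :: rest => (a - 1) :: (rest.dropLast ++ [rest.getLastD 0 + 1])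

lemma phi_eq (w : List ℕ) :
    phi w = blockWord ((T (((blocks w).map Prod.fst).reverse)).zip ((blocks w).map Prod.snd)) := rfl

lemma T_concat (a m0 : ℕ) (X : List ℕ) :
    T (a :: (X ++ [m0])) = (a - 1) :: (X ++ [m0 + 1]) := by
  cases X with
  | nil => simp [T]
  | cons x X' =>
    show (a - 1) :: ((x :: X' ++ [m0]).dropLast ++ [(x :: X' ++ [m0]).getLastD 0 + 1])
        = (a - 1) :: (x :: X' ++ [m0 + 1])
    rw [List.dropLast_concat, List.getLastD_concat]

lemma isBinary_blockWord (bs : List (ℕ × ℕ)) : IsBinary (blockWord bs) := by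
  intro a ha
  simp only [blockWord, List.mem_flatMap, List.mem_append, List.mem_replicate] at ha
  obtain ⟨p, _, h | h⟩ := ha
  · left; exact h.2
  · right; exact h.2

theorem stmt_15 (w : List ℕ) (hw : IsBinary w) :
    IsBinary (phi w) ∧ phi (phi w) = w := by
  refine ⟨by rw [phi_eq]; exact isBinary_blockWord _, ?_⟩
  obtain ⟨hbw, htail, hdrop, hmem⟩ := blocks_spec w hw
  rcases h1 : blocks w with _ | ⟨p0, rest⟩
  · -- w = []
    rw [h1, blockWord_nil] at hbw
    rw [← hbw]
    rfl
  · rcases rest.eq_nil_or_concat with rfl | ⟨mid, pd, rfl⟩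
    · -- single block : phi w = w
      have hphi : phi w = w := by
        rw [phi_eq, h1]
        show blockWord ((T [p0.1]).zip [p0.2]) = w
        show blockWord [(p0.1, p0.2)] = w
        rw [← hbw, h1]
      rw [hphi, hphi]
    · rw [List.concat_eq_append] at h1
      rw [h1] at hbw htail hdrop hmem
      set Z : List (ℕ × ℕ) := ((mid.map Prod.fst).reverse).zip (mid.map Prod.snd) with hZ
      have hlenZ : ((mid.map Prod.fst).reverse).length = (mid.map Prod.snd).length := by simp
      set bs' : List (ℕ × ℕ) := (pd.1 - 1, p0.2) :: (Z ++ [(p0.1 + 1, pd.2)]) with hbs'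
      have hpd1 : 0 < pd.1 := htail pd (by simp)
      have hdl : (p0 :: (mid ++ [pd])).dropLast = p0 :: mid := by
        rw [← List.cons_append, List.dropLast_concat]
      have hp02 : 0 < p0.2 := by
        apply hdrop p0
        rw [hdl]
        exact List.mem_cons_self
      have hZfst : ∀ p ∈ Z, 0 < p.1 := by
        intro p hp
        obtain ⟨hp1, _⟩ := List.of_mem_zip hp
        rw [List.mem_reverse, List.mem_map] at hp1
        obtain ⟨q, hq, hq1⟩ := hp1
        have : 0 < q.1 := htail q (by simp [hq])
        omega
      have hZsnd : ∀ p ∈ Z, 0 < p.2 := by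
        intro p hp
        obtain ⟨_, hp2⟩ := List.of_mem_zip hp
        rw [List.mem_map] at hp2
        obtain ⟨q, hq, hq2⟩ := hp2
        have : 0 < q.2 := by
          apply hdrop q
          rw [hdl]
          exact List.mem_cons_of_mem _ hq
        omega
      -- step 1 : phi w = blockWord bs'
      have hphi1 : phi w = blockWord bs' := by
        rw [phi_eq, h1]
        congr 1
        have hf : ((p0 :: (mid ++ [pd])).map Prod.fst).reverse
            = pd.1 :: ((mid.map Prod.fst).reverse ++ [p0.1]) := by
          simp
        rw [hf, T_concat]
        have hs : (p0 :: (mid ++ [pd])).map Prod.snd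
            = p0.2 :: (mid.map Prod.snd ++ [pd.2]) := by simp
        rw [hs]
        rw [List.zip_cons_cons, List.zip_append hlenZ]
        rfl
      -- step 2 : blocks (phi w) = bs'
      have hblocks' : blocks (phi w) = bs' := by
        rw [hphi1]
        apply blocks_blockWord
        · intro p hp
          simp only [hbs', List.tail_cons, List.mem_append, List.mem_singleton] at hp
          rcases hp with hp | rfl
          · exact hZfst p hp
          · simp
        · intro p hp
          have : bs'.dropLast = (pd.1 - 1, p0.2) :: Z := by
            rw [hbs', show (pd.1 - 1, p0.2) :: (Z ++ [(p0.1 + 1, pd.2)])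
              = ((pd.1 - 1, p0.2) :: Z) ++ [(p0.1 + 1, pd.2)] by simp, List.dropLast_concat]
          rw [this] at hp
          rcases List.mem_cons.mp hp with rfl | hp
          · exact hp02
          · exact hZsnd p hp
        · intro hc
          rcases List.mem_cons.mp hc with hc | hc
          · have := congrArg Prod.snd hc
            simp at this
            omega
          · rcases List.mem_append.mp hc with hc | hc
            · have := hZfst _ hc; simp at this
            · rw [List.mem_singleton] at hc
              have := congrArg Prod.fst hc
              simp at this
      -- step 3 : compute phi (phi w)
      rw [phi_eq (phi w), hblocks']
      have hmapf : bs'.map Prod.fst = (pd.1 - 1) :: ((mid.map Prod.fst).reverse ++ [p0.1 + 1]) := by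
        rw [hbs']
        simp only [List.map_cons, List.map_append]
        congr 2
        exact List.map_fst_zip (le_of_eq hlenZ)
      have hmaps : bs'.map Prod.snd = p0.2 :: (mid.map Prod.snd ++ [pd.2]) := by
        rw [hbs']
        simp only [List.map_cons, List.map_append]
        congr 2
        exact List.map_snd_zip (ge_of_eq hlenZ)
      rw [hmapf, hmaps]
      have hrev : ((pd.1 - 1) :: ((mid.map Prod.fst).reverse ++ [p0.1 + 1])).reverse
          = (p0.1 + 1) :: (mid.map Prod.fst ++ [pd.1 - 1]) := by
        simp
      rw [hrev, T_concat]
      have e1 : p0.1 + 1 - 1 = p0.1 := by omega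
      have e2 : pd.1 - 1 + 1 = pd.1 := by omega
      rw [e1, e2]
      rw [List.zip_cons_cons, List.zip_append (by simp)]
      have : (mid.map Prod.fst).zip (mid.map Prod.snd) = mid := by
        rw [List.zip_map']
        simp
      rw [this]
      have hfin : ((p0.1, p0.2) :: (mid ++ [pd.1].zip [pd.2]) : List (ℕ × ℕ))
          = p0 :: (mid ++ [pd]) := by simp
      rw [hfin, hbw]
end

section
/- Let G_n be the set of binary words of length n with no two consecutive twos, and φ the map φ(1^{m_0} 2^{n_0} ⋯ 1^{m_d} 2^{n_d}) = 1^{m_d−1} 2^{n_0} 1^{m_{d−1}} 2^{n_1} ⋯ 2^{n_{d−2}} 1^{m_1} 2^{n_{d−1}} 1^{m_0+1} 2^{n_d}. Then φ(G_n) = G_n, and consequently Φ₂(G_n) = Ψ(G_n) = Γ(G_n); in particular (G_n, Φ₂(G_n)), (G_n, Ψ(G_n)) and (G_n, Γ(G_n)) are the same Eulerian pair. -/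
namespace Stmt17

lemma leadCount_head_ne (a : ℕ) (w : List ℕ) (h : ∀ b ∈ w.head?, b ≠ a) :
    leadCount a w = (0, w) := by
  cases w with
  | nil => rfl
  | cons b rest =>
    have hb : b ≠ a := h b (by simp)
    simp [leadCount, hb]

lemma leadCount_replicate_append (a : ℕ) (k : ℕ) (w : List ℕ) (h : ∀ b ∈ w.head?, b ≠ a) :
    leadCount a (List.replicate k a ++ w) = (k, w) := by
  induction k with
  | zero => simpa using leadCount_head_ne a w h
  | succ k ih => simp [List.replicate_succ, leadCount, ih]

lemma leadCount_spec (a : ℕ) (w : List ℕ) :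
    List.replicate (leadCount a w).1 a ++ (leadCount a w).2 = w := by
  induction w with
  | nil => rfl
  | cons b rest ih =>
    by_cases hb : b = a
    · subst hb; simp [leadCount, List.replicate_succ, ih]
    · simp [leadCount, hb]

lemma leadCount_length (a : ℕ) (w : List ℕ) :
    (leadCount a w).1 + (leadCount a w).2.length = w.length := by
  conv_rhs => rw [← leadCount_spec a w]
  simp

lemma leadCount_binary (a : ℕ) (w : List ℕ) (h : IsBinary w) :
    IsBinary (leadCount a w).2 := by
  intro x hx
  exact h x (by rw [← leadCount_spec a w]; simp [hx])

lemma leadCount_head_eq (a : ℕ) (rest : List ℕ) :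
    1 ≤ (leadCount a (a :: rest)).1 := by
  simp [leadCount]

lemma leadCount_progress (w : List ℕ) (hb : IsBinary w) (hw : w ≠ []) :
    1 ≤ (leadCount 1 w).1 + (leadCount 2 (leadCount 1 w).2).1 := by
  obtain ⟨b, rest, rfl⟩ := List.exists_cons_of_ne_nil hw
  rcases hb b (by simp) with rfl | rfl
  · have := leadCount_head_eq 1 rest; omega
  · rcases Nat.eq_zero_or_pos (leadCount 1 (2 :: rest)).1 with h0 | h0
    · have hp2 : (leadCount 1 (2 :: rest)).2 = 2 :: rest := by
        have h := leadCount_spec 1 (2 :: rest)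
        rw [h0] at h; simpa using h
      rw [hp2]
      have := leadCount_head_eq 2 rest; omega
    · omega

lemma blocksAux_nil (f : ℕ) : blocksAux f [] = [] := by
  cases f <;> rfl

lemma blocksAux_succ (f : ℕ) (w : List ℕ) (hw : w ≠ []) :
    blocksAux (f + 1) w =
      (let p := leadCount 1 w
       let q := leadCount 2 p.2
       (p.1, q.1) :: blocksAux f q.2) := by
  cases w with
  | nil => exact absurd rfl hw
  | cons b rest => rfl

lemma blocksAux_congr : ∀ (n : ℕ) (w : List ℕ), w.length ≤ n → IsBinary w →
    ∀ f₁ f₂, w.length ≤ f₁ → w.length ≤ f₂ → blocksAux f₁ w = blocksAux f₂ w := by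
  intro n
  induction n with
  | zero =>
    intro w hw _ f₁ f₂ _ _
    have : w = [] := List.eq_nil_of_length_eq_zero (Nat.le_zero.mp hw)
    subst this; rw [blocksAux_nil, blocksAux_nil]
  | succ n ih =>
    intro w hw hb f₁ f₂ h₁ h₂
    rcases List.eq_nil_or_concat w with hnil | _
    · subst hnil; rw [blocksAux_nil, blocksAux_nil]
    rename_i hcat
    have hwne : w ≠ [] := by rintro rfl; obtain ⟨l, b, h⟩ := hcat; simp at h
    have hwlen : 1 ≤ w.length := List.length_pos_iff.mpr hwne
    obtain ⟨g₁, rfl⟩ : ∃ g, f₁ = g + 1 := ⟨f₁ - 1, by omega⟩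
    obtain ⟨g₂, rfl⟩ : ∃ g, f₂ = g + 1 := ⟨f₂ - 1, by omega⟩
    rw [blocksAux_succ _ _ hwne, blocksAux_succ _ _ hwne]
    set p := leadCount 1 w with hp
    set q := leadCount 2 p.2 with hq
    have hcons : 1 ≤ p.1 + q.1 := by
      have h := leadCount_progress w hb hwne
      rw [← hp] at h; rw [← hq] at h; exact h
    have hqlen : q.2.length + (p.1 + q.1) = w.length := by
      have e1 := leadCount_length 1 w
      have e2 := leadCount_length 2 p.2
      rw [← hp] at e1; rw [← hq] at e2; omega
    have hqbin : IsBinary q.2 := leadCount_binary 2 _ (leadCount_binary 1 w hb)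
    simp only []
    congr 1
    exact ih q.2 (by omega) hqbin g₁ g₂ (by omega) (by omega)

lemma blocks_nil : blocks [] = [] := rfl

lemma blocks_eq (w : List ℕ) (hb : IsBinary w) (f : ℕ) (hf : w.length ≤ f) :
    blocksAux f w = blocks w :=
  blocksAux_congr w.length w le_rfl hb f w.length hf le_rfl

lemma blocks_cons (m n : ℕ) (r : List ℕ) (hb : IsBinary r)
    (h2 : ∀ b ∈ r.head?, b ≠ 2) (h1 : n = 0 → ∀ b ∈ r.head?, b ≠ 1)
    (hpos : 0 < m + n) :
    blocks (List.replicate m 1 ++ (List.replicate n 2 ++ r)) = (m, n) :: blocks r := by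
  set w := List.replicate m 1 ++ (List.replicate n 2 ++ r) with hw
  have hwlen : w.length = m + n + r.length := by simp [hw]; omega
  have hwne : w ≠ [] := by
    intro h; rw [h] at hwlen; simp at hwlen; omega
  have hp : leadCount 1 w = (m, List.replicate n 2 ++ r) := by
    apply leadCount_replicate_append
    intro b hbmem
    rcases Nat.eq_zero_or_pos n with hn0 | hn0
    · subst hn0; simpa using h1 rfl b (by simpa using hbmem)
    · obtain ⟨n', rfl⟩ : ∃ n', n = n' + 1 := ⟨n - 1, by omega⟩
      simp [List.replicate_succ] at hbmem
      omega
  have hq : leadCount 2 (List.replicate n 2 ++ r) = (n, r) :=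
    leadCount_replicate_append 2 n r h2
  obtain ⟨f, hf⟩ : ∃ f, w.length = f + 1 := ⟨w.length - 1, by omega⟩
  rw [blocks, hf, blocksAux_succ _ _ hwne]
  simp only [hp, hq]
  congr 1
  exact blocks_eq r hb f (by omega)

end Stmt17
namespace Stmt17

def msns : List ℕ → ℕ → List (ℕ × ℕ)
  | [], _ => []
  | [m], t => [(m, t)]
  | m :: rest, t => (m, 1) :: msns rest t

def Wrd (ms : List ℕ) (t : ℕ) : List ℕ := blockWord (msns ms t)

def Cond (ms : List ℕ) (t : ℕ) : Prop :=
  ms ≠ [] ∧ (∀ m ∈ ms.tail, 1 ≤ m) ∧ t ≤ 1 ∧ 0 < ms.sum + t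

lemma msns_nil (t : ℕ) : msns [] t = [] := rfl

lemma msns_singleton (m t : ℕ) : msns [m] t = [(m, t)] := rfl

lemma msns_cons (m : ℕ) (rest : List ℕ) (t : ℕ) (h : rest ≠ []) :
    msns (m :: rest) t = (m, 1) :: msns rest t := by
  obtain ⟨a, r, rfl⟩ := List.exists_cons_of_ne_nil h
  rfl

lemma msns_ne_nil (ms : List ℕ) (t : ℕ) (h : ms ≠ []) : msns ms t ≠ [] := by
  obtain ⟨a, r, rfl⟩ := List.exists_cons_of_ne_nil h
  cases r with
  | nil => simp [msns_singleton]
  | cons b r' => rw [msns_cons a (b :: r') t (by simp)]; simp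

lemma blockWord_nil : blockWord [] = [] := rfl

lemma blockWord_cons (p : ℕ × ℕ) (bs : List (ℕ × ℕ)) :
    blockWord (p :: bs) =
      List.replicate p.1 1 ++ (List.replicate p.2 2 ++ blockWord bs) := by
  simp [blockWord]

lemma Wrd_singleton (m t : ℕ) :
    Wrd [m] t = List.replicate m 1 ++ List.replicate t 2 := by
  simp [Wrd, msns_singleton, blockWord]

lemma Wrd_cons (m : ℕ) (rest : List ℕ) (t : ℕ) (h : rest ≠ []) :
    Wrd (m :: rest) t = List.replicate m 1 ++ (2 :: Wrd rest t) := by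
  rw [Wrd, msns_cons _ _ _ h, blockWord_cons]
  rfl

lemma isBinary_blockWord (bs : List (ℕ × ℕ)) : IsBinary (blockWord bs) := by
  intro a ha
  simp only [blockWord, List.mem_flatMap, List.mem_append, List.mem_replicate] at ha
  obtain ⟨p, _, h | h⟩ := ha
  · exact Or.inl h.2
  · exact Or.inr h.2

lemma Wrd_head (ms : List ℕ) (t : ℕ) (hne : ms ≠ []) (hh : 1 ≤ ms.headD 0) :
    ∃ v, Wrd ms t = 1 :: v := by
  obtain ⟨m, rest, rfl⟩ := List.exists_cons_of_ne_nil hne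
  simp only [List.headD_cons] at hh
  obtain ⟨m', rfl⟩ : ∃ m', m = m' + 1 := ⟨m - 1, by omega⟩
  cases rest with
  | nil => exact ⟨_, by rw [Wrd_singleton, List.replicate_succ]; rfl⟩
  | cons b r => exact ⟨_, by rw [Wrd_cons _ _ _ (by simp), List.replicate_succ]; rfl⟩

lemma blocks_Wrd : ∀ (ms : List ℕ) (t : ℕ), ms ≠ [] → (∀ m ∈ ms.tail, 1 ≤ m) →
    0 < ms.sum + t → blocks (Wrd ms t) = msns ms t := by
  intro ms
  induction ms with
  | nil => intro t h; exact absurd rfl h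
  | cons m rest ih =>
    intro t _ htail hsum
    cases rest with
    | nil =>
      rw [Wrd_singleton, msns_singleton]
      have := blocks_cons m t [] (by intro a ha; simp at ha) (by simp) (by simp) (by simpa using hsum)
      simpa [blocks_nil] using this
    | cons b r =>
      have hbne : (b :: r) ≠ [] := by simp
      have hb1 : 1 ≤ b := htail b (by simp)
      rw [Wrd_cons _ _ _ hbne, msns_cons _ _ _ hbne]
      obtain ⟨v, hv⟩ := Wrd_head (b :: r) t hbne (by simpa using hb1)
      have h2 : ∀ x ∈ (Wrd (b :: r) t).head?, x ≠ 2 := by rw [hv]; simp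
      have := blocks_cons m 1 (Wrd (b :: r) t) (isBinary_blockWord _) h2 (by simp) (by omega)
      simp only [List.replicate_one] at this ⊢
      rw [show (2 : ℕ) :: Wrd (b :: r) t = [2] ++ Wrd (b :: r) t from rfl, this]
      congr 1
      apply ih t hbne (fun x hx => htail x (by simp only [List.tail_cons] at hx ⊢; exact List.mem_cons_of_mem _ hx))
      have hs : b ≤ (b :: r).sum := by simp only [List.sum_cons]; omega
      omega

lemma msns_map_fst (ms : List ℕ) (t : ℕ) : (msns ms t).map Prod.fst = ms := by
  induction ms with
  | nil => rfl
  | cons m rest ih =>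
    cases rest with
    | nil => rfl
    | cons b r => rw [msns_cons _ _ _ (by simp)]; simpa using ih

lemma msns_map_snd (ms : List ℕ) (t : ℕ) (h : ms ≠ []) :
    (msns ms t).map Prod.snd = List.replicate (ms.length - 1) 1 ++ [t] := by
  induction ms with
  | nil => exact absurd rfl h
  | cons m rest ih =>
    cases rest with
    | nil => rfl
    | cons b r =>
      rw [msns_cons _ _ _ (by simp)]
      simp only [List.map_cons, ih (by simp)]
      simp [List.replicate_succ]

lemma msns_tail (m : ℕ) (rest : List ℕ) (t : ℕ) :
    (msns (m :: rest) t).tail = msns rest t := by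
  cases rest with
  | nil => rfl
  | cons b r => rw [msns_cons _ _ _ (by simp)]; rfl

lemma msns_dropLast (ms : List ℕ) (t : ℕ) :
    (msns ms t).dropLast = ms.dropLast.map (fun m => (m, 1)) := by
  induction ms with
  | nil => rfl
  | cons m rest ih =>
    cases rest with
    | nil => rfl
    | cons b r =>
      rw [msns_cons _ _ _ (by simp)]
      rw [List.dropLast_cons_of_ne_nil (msns_ne_nil _ _ (by simp)),
        List.dropLast_cons_of_ne_nil (by simp : (b :: r) ≠ [])]
      simp [ih]

lemma msns_headD_fst (m : ℕ) (rest : List ℕ) (t : ℕ) :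
    ((msns (m :: rest) t).headD (0,0)).1 = m := by
  cases rest with
  | nil => rfl
  | cons b r => rw [msns_cons _ _ _ (by simp)]; rfl

lemma getLastD_cons' {α : Type} (a : α) (l : List α) (d : α) :
    (a :: l).getLastD d = l.getLastD a := by
  cases l <;> rfl

lemma getLastD_congr {α : Type} (l : List α) (d d' : α) (h : l ≠ []) :
    l.getLastD d = l.getLastD d' := by
  rcases List.eq_nil_or_concat l with rfl | ⟨l', x, rfl⟩
  · exact absurd rfl h
  · rw [List.concat_eq_append, List.getLastD_concat, List.getLastD_concat]

lemma msns_getLastD (ms : List ℕ) (t : ℕ) (h : ms ≠ []) :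
    (msns ms t).getLastD (0,0) = (ms.getLastD 0, t) := by
  induction ms with
  | nil => exact absurd rfl h
  | cons m rest ih =>
    cases rest with
    | nil => rfl
    | cons b r =>
      rw [msns_cons m (b :: r) t (by simp)]
      have h1 : msns (b :: r) t ≠ [] := msns_ne_nil _ _ (by simp)
      rw [getLastD_cons', getLastD_congr _ _ ((0 : ℕ),(0 : ℕ)) h1, ih (by simp),
        getLastD_cons' m (b :: r) 0, getLastD_congr (b :: r) m 0 (by simp)]

lemma zip_eq_msns : ∀ (ms : List ℕ) (t : ℕ), ms ≠ [] →
    ms.zip (List.replicate (ms.length - 1) 1 ++ [t]) = msns ms t := by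
  intro ms
  induction ms with
  | nil => intro t h; exact absurd rfl h
  | cons m rest ih =>
    intro t _
    cases rest with
    | nil => rfl
    | cons b r =>
      rw [msns_cons _ _ _ (by simp)]
      have : (m :: b :: r).length - 1 = (b :: r).length - 1 + 1 := by simp
      rw [this, List.replicate_succ]
      simp only [List.cons_append, List.zip_cons_cons]
      rw [ih t (by simp)]

lemma Wrd_length (ms : List ℕ) (t : ℕ) (h : ms ≠ []) :
    (Wrd ms t).length = ms.sum + (ms.length - 1) + t := by
  induction ms with
  | nil => exact absurd rfl h
  | cons m rest ih =>
    cases rest with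
    | nil => simp [Wrd_singleton]
    | cons b r =>
      rw [Wrd_cons _ _ _ (by simp)]
      simp only [List.length_append, List.length_replicate, List.length_cons,
        ih (by simp)]
      simp
      omega

lemma chain'_replicate (k a : ℕ) (R : ℕ → ℕ → Prop) (h : R a a) :
    List.Chain' R (List.replicate k a) := List.isChain_replicate_of_rel k h

lemma Wrd_chain' (ms : List ℕ) (t : ℕ) (hc : Cond ms t) :
    (Wrd ms t).Chain' fun a b => ¬(a = 2 ∧ b = 2) := by
  obtain ⟨hne, htail, ht, hsum⟩ := hc
  clear hsum
  induction ms with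
  | nil => exact absurd rfl hne
  | cons m rest ih =>
    cases rest with
    | nil =>
      rw [Wrd_singleton]
      rw [List.Chain', List.isChain_append]
      refine ⟨chain'_replicate _ _ _ (by simp), ?_, ?_⟩
      · interval_cases t <;> simp
      · intro x hx y hy
        have : x = 1 := by
          rcases Nat.eq_zero_or_pos m with rfl | hm
          · simp at hx
          · obtain ⟨m', rfl⟩ : ∃ m', m = m' + 1 := ⟨m - 1, by omega⟩
            have : List.replicate (m' + 1) 1 = List.replicate m' 1 ++ [1] := by
              rw [← List.replicate_succ']
            rw [this, List.getLast?_concat] at hx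
            simpa using hx.symm
        omega
    | cons b r =>
      rw [Wrd_cons _ _ _ (by simp)]
      have ihh := ih (by simp) (fun x hx => htail x
        (by simp only [List.tail_cons] at hx ⊢; exact List.mem_cons_of_mem _ hx))
      rw [List.Chain', List.isChain_append]
      refine ⟨chain'_replicate _ _ _ (by simp), ?_, ?_⟩
      · obtain ⟨v, hv⟩ := Wrd_head (b :: r) t (by simp) (by simpa using htail b (by simp))
        rw [hv]
        rw [List.isChain_cons_cons]
        exact ⟨by simp, hv ▸ ihh⟩
      · intro x hx y hy
        have : y = 2 := by
          simp only [List.head?_cons, Option.mem_def, Option.some.injEq] at hy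
          omega
        have hx1 : x = 1 := by
          have := List.mem_of_mem_getLast? hx
          simpa using (List.eq_of_mem_replicate this)
        omega

lemma Wrd_mem_GSet (ms : List ℕ) (t : ℕ) (hc : Cond ms t) :
    Wrd ms t ∈ GSet ((Wrd ms t).length) :=
  ⟨isBinary_blockWord _, rfl, Wrd_chain' ms t hc⟩

lemma exists_rep : ∀ (w : List ℕ), IsBinary w →
    (w.Chain' fun a b => ¬(a = 2 ∧ b = 2)) → w ≠ [] → ∃ ms t, Cond ms t ∧ w = Wrd ms t := by
  intro w
  induction w with
  | nil => intro _ _ h; exact absurd rfl h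
  | cons a w' ih =>
    intro hb hch _
    cases w' with
    | nil =>
      rcases hb a (by simp) with rfl | rfl
      · exact ⟨[1], 0, ⟨by simp, by simp, by simp, by simp⟩, by simp [Wrd_singleton]⟩
      · exact ⟨[0], 1, ⟨by simp, by simp, by simp, by simp⟩, by simp [Wrd_singleton]⟩
    | cons c w'' =>
      obtain ⟨ms', t, hc', hw'⟩ := ih (fun x hx => hb x (by simp [hx]))
        (hch.tail) (by simp)
      obtain ⟨hne', htail', ht', hsum'⟩ := hc'
      obtain ⟨m0, rest, rfl⟩ := List.exists_cons_of_ne_nil hne'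
      rcases hb a (by simp) with rfl | rfl
      · refine ⟨(m0 + 1) :: rest, t, ⟨by simp, htail', ht', by simp only [List.sum_cons] at hsum' ⊢; omega⟩, ?_⟩
        cases rest with
        | nil => rw [Wrd_singleton] at hw' ⊢; rw [List.replicate_succ]; simp [hw']
        | cons b r =>
          rw [Wrd_cons _ _ _ (by simp)] at hw' ⊢
          rw [List.replicate_succ]; simp [hw']
      · have hcne : c ≠ 2 := by
          have := (List.isChain_cons_cons.mp hch).1
          intro h; exact this ⟨rfl, h⟩
        have hc1 : c = 1 := by rcases hb c (by simp) with h | h; exact h; exact absurd h hcne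
        have hm0 : 1 ≤ m0 := by
          by_contra hm
          have hm0' : m0 = 0 := by omega
          subst hm0'
          cases rest with
          | nil =>
            rw [Wrd_singleton] at hw'
            simp at hw'
            have ht1 : 1 ≤ t := by simp at hsum'; omega
            obtain ⟨t', rfl⟩ : ∃ t', t = t' + 1 := ⟨t - 1, by omega⟩
            rw [List.replicate_succ] at hw'
            simp at hw'
            omega
          | cons b r =>
            rw [Wrd_cons _ _ _ (by simp)] at hw'
            simp at hw'
            omega
        refine ⟨0 :: m0 :: rest, t, ⟨by simp, ?_, ht', by simp only [List.sum_cons] at hsum' ⊢; omega⟩, ?_⟩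
        · intro x hx
          simp at hx
          rcases hx with rfl | hx
          · exact hm0
          · exact htail' x (by simp [hx])
        · rw [Wrd_cons _ _ _ (by simp)]
          simp [hw']

lemma mem_GSet_iff (n : ℕ) (w : List ℕ) :
    w ∈ GSet n ↔ (w = [] ∧ n = 0) ∨
      ∃ ms t, Cond ms t ∧ w = Wrd ms t ∧ n = (Wrd ms t).length := by
  constructor
  · rintro ⟨hb, hlen, hch⟩
    rcases eq_or_ne w [] with rfl | hne
    · exact Or.inl ⟨rfl, hlen.symm⟩
    · obtain ⟨ms, t, hc, hw⟩ := exists_rep w hb hch hne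
      exact Or.inr ⟨ms, t, hc, hw, by rw [← hw, hlen]⟩
  · rintro (⟨rfl, rfl⟩ | ⟨ms, t, hc, rfl, rfl⟩)
    · exact ⟨by intro a ha; simp at ha, rfl, by simp [List.Chain']⟩
    · exact Wrd_mem_GSet ms t hc

end Stmt17
namespace Stmt17

def phiMs (ms : List ℕ) : List ℕ :=
  match ms.reverse with
  | [] => []
  | [a] => [a]
  | a :: rest => (a - 1) :: (rest.dropLast ++ [rest.getLastD 0 + 1])

lemma phi_eq (w : List ℕ) : phi w =
    blockWord ((phiMs ((blocks w).map Prod.fst)).zip ((blocks w).map Prod.snd)) := rfl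

lemma phiMs_nil : phiMs [] = [] := rfl

lemma phiMs_singleton (m : ℕ) : phiMs [m] = [m] := rfl

lemma phiMs_concat (m0 : ℕ) (mid : List ℕ) (md : ℕ) :
    phiMs (m0 :: (mid ++ [md])) = (md - 1) :: (mid.reverse ++ [m0 + 1]) := by
  unfold phiMs
  rw [show (m0 :: (mid ++ [md])).reverse = md :: (mid.reverse ++ [m0]) by simp]
  obtain ⟨c, cs, hc⟩ := List.exists_cons_of_ne_nil (show mid.reverse ++ [m0] ≠ [] by simp)
  rw [hc]
  show (md - 1) :: ((c :: cs).dropLast ++ [(c :: cs).getLastD 0 + 1]) = _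
  rw [← hc, List.dropLast_concat, List.getLastD_concat]

lemma list_cases3 (l : List ℕ) :
    l = [] ∨ (∃ a, l = [a]) ∨ ∃ a mid b, l = a :: (mid ++ [b]) := by
  cases l with
  | nil => exact Or.inl rfl
  | cons a r =>
    rcases List.eq_nil_or_concat r with rfl | ⟨mid, b, rfl⟩
    · exact Or.inr (Or.inl ⟨a, rfl⟩)
    · exact Or.inr (Or.inr ⟨a, mid, b, by simp⟩)

lemma phiMs_length (ms : List ℕ) : (phiMs ms).length = ms.length := by
  rcases list_cases3 ms with rfl | ⟨a, rfl⟩ | ⟨a, mid, b, rfl⟩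
  · rfl
  · rfl
  · rw [phiMs_concat]; simp

lemma phiMs_ne_nil (ms : List ℕ) (h : ms ≠ []) : phiMs ms ≠ [] := by
  intro hh
  have := phiMs_length ms
  rw [hh] at this
  exact h (List.eq_nil_of_length_eq_zero this.symm)

lemma phiMs_sum (ms : List ℕ) (h : ∀ m ∈ ms.tail, 1 ≤ m) :
    (phiMs ms).sum = ms.sum := by
  rcases list_cases3 ms with rfl | ⟨a, rfl⟩ | ⟨a, mid, b, rfl⟩
  · rfl
  · rfl
  · have hb : 1 ≤ b := h b (by simp)
    rw [phiMs_concat]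
    simp [List.sum_append, List.sum_reverse]
    omega

lemma phiMs_tail (ms : List ℕ) (h : ∀ m ∈ ms.tail, 1 ≤ m) :
    ∀ m ∈ (phiMs ms).tail, 1 ≤ m := by
  rcases list_cases3 ms with rfl | ⟨a, rfl⟩ | ⟨a, mid, b, rfl⟩
  · simp [phiMs_nil]
  · simp [phiMs_singleton]
  · rw [phiMs_concat]
    intro m hm
    simp only [List.tail_cons, List.mem_append, List.mem_reverse, List.mem_singleton] at hm
    rcases hm with hm | rfl
    · exact h m (by simp [hm])
    · omega

lemma phiMs_cond (ms : List ℕ) (t : ℕ) (hc : Cond ms t) : Cond (phiMs ms) t := by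
  obtain ⟨hne, htail, ht, hsum⟩ := hc
  exact ⟨phiMs_ne_nil ms hne, phiMs_tail ms htail, ht, by rw [phiMs_sum ms htail]; exact hsum⟩

lemma phiMs_invol (ms : List ℕ) (h : ∀ m ∈ ms.tail, 1 ≤ m) :
    phiMs (phiMs ms) = ms := by
  rcases list_cases3 ms with rfl | ⟨a, rfl⟩ | ⟨a, mid, b, rfl⟩
  · rfl
  · rfl
  · have hb : 1 ≤ b := h b (by simp)
    rw [phiMs_concat, phiMs_concat]
    simp [Nat.sub_add_cancel hb]

lemma phi_Wrd (ms : List ℕ) (t : ℕ) (hc : Cond ms t) :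
    phi (Wrd ms t) = Wrd (phiMs ms) t := by
  obtain ⟨hne, htail, ht, hsum⟩ := hc
  rw [phi_eq, blocks_Wrd ms t hne htail hsum, msns_map_fst, msns_map_snd ms t hne]
  rw [show ms.length - 1 = (phiMs ms).length - 1 by rw [phiMs_length]]
  rw [zip_eq_msns (phiMs ms) t (phiMs_ne_nil ms hne)]
  rfl

lemma phi_nil : phi [] = [] := rfl

lemma phi_mem (n : ℕ) (w : List ℕ) (h : w ∈ GSet n) : phi w ∈ GSet n := by
  rw [mem_GSet_iff] at h ⊢
  rcases h with ⟨rfl, rfl⟩ | ⟨ms, t, hc, rfl, rfl⟩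
  · exact Or.inl ⟨phi_nil, rfl⟩
  · refine Or.inr ⟨phiMs ms, t, phiMs_cond ms t hc, phi_Wrd ms t hc, ?_⟩
    rw [Wrd_length _ _ hc.1, Wrd_length _ _ (phiMs_ne_nil ms hc.1),
      phiMs_length, phiMs_sum ms hc.2.1]

lemma phi_phi (n : ℕ) (w : List ℕ) (h : w ∈ GSet n) : phi (phi w) = w := by
  rw [mem_GSet_iff] at h
  rcases h with ⟨rfl, rfl⟩ | ⟨ms, t, hc, rfl, _⟩
  · rw [phi_nil, phi_nil]
  · rw [phi_Wrd ms t hc, phi_Wrd (phiMs ms) t (phiMs_cond ms t hc),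
      phiMs_invol ms hc.2.1]

lemma phi_image (n : ℕ) : phi '' GSet n = GSet n := by
  apply Set.Subset.antisymm
  · rintro _ ⟨w, hw, rfl⟩
    exact phi_mem n w hw
  · intro w hw
    exact ⟨phi w, phi_mem n w hw, phi_phi n w hw⟩

end Stmt17
namespace Stmt17

lemma flatMap_fst1 (l : List (ℕ × ℕ)) :
    (l.flatMap fun p => List.replicate (p.1 - 1) 1 ++ [2]) =
      (l.map Prod.fst).flatMap (fun m => List.replicate (m - 1) 1 ++ [2]) := by
  induction l with
  | nil => rfl
  | cons p l ih => simp [ih]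

lemma flatMap_fst2 (l : List (ℕ × ℕ)) :
    (l.flatMap fun p => 2 :: List.replicate (p.1 - 1) 1) =
      (l.map Prod.fst).flatMap (fun m => 2 :: List.replicate (m - 1) 1) := by
  induction l with
  | nil => rfl
  | cons p l ih => simp [ih]

lemma flatMap_pair_one {α : Type} (l : List ℕ) (g : ℕ × ℕ → List α) :
    (l.map (fun m => (m, 1))).flatMap g = l.flatMap (fun m => g (m, 1)) := by
  induction l with
  | nil => rfl
  | cons m l ih => simp [ih]

lemma flatMap_one_const (l : List ℕ) :
    l.flatMap (fun _ => ([1] : List ℕ)) = List.replicate l.length 1 := by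
  induction l with
  | nil => rfl
  | cons m l ih => simp [ih, List.replicate_succ]

lemma dropLast_replicate_succ (k : ℕ) (x : ℕ) :
    (List.replicate (k + 1) x).dropLast = List.replicate k x := by
  rw [List.replicate_succ', List.dropLast_concat]

lemma Phi2_Wrd (ms : List ℕ) (t : ℕ) (hc : Cond ms t) :
    Phi2 (Wrd ms t) =
      (ms.tail.reverse.flatMap fun m => List.replicate (m - 1) 1 ++ [2])
        ++ List.replicate (ms.headD 0) 1
        ++ List.replicate (ms.length - 1) 1
        ++ List.replicate t 2 := by
  obtain ⟨hne, htail, ht, hsum⟩ := hc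
  obtain ⟨m, rest, rfl⟩ := List.exists_cons_of_ne_nil hne
  rw [Phi2, blocks_Wrd _ t (by simp) htail hsum]
  rw [phi2Blocks]
  rw [msns_tail, msns_headD_fst, msns_dropLast, msns_getLastD _ _ (by simp)]
  rw [flatMap_fst1, List.map_reverse, msns_map_fst, flatMap_pair_one]
  simp only [Nat.sub_self, List.replicate_zero, List.nil_append]
  rw [flatMap_one_const]
  simp

lemma Psi_Wrd (ms : List ℕ) (t : ℕ) (hc : Cond ms t) :
    Psi (Wrd ms t) =
      List.replicate (ms.headD 0) 1
        ++ (ms.tail.flatMap fun m => 2 :: List.replicate (m - 1) 1)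
        ++ List.replicate (ms.length - 1) 1
        ++ List.replicate t 2 := by
  obtain ⟨hne, htail, ht, hsum⟩ := hc
  obtain ⟨m, rest, rfl⟩ := List.exists_cons_of_ne_nil hne
  rw [Psi, blocks_Wrd _ t (by simp) htail hsum]
  rw [psiBlocks]
  rw [msns_tail, msns_headD_fst, msns_dropLast, msns_getLastD _ _ (by simp)]
  rw [flatMap_fst2, msns_map_fst, flatMap_pair_one]
  simp only [Nat.sub_self, List.replicate_zero, List.nil_append]
  rw [flatMap_one_const]
  simp

lemma shift2 (l : List ℕ) (X : List ℕ) :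
    2 :: ((l.flatMap fun m => List.replicate (m - 1) 1 ++ [2]) ++ X) =
      (l.flatMap fun m => 2 :: List.replicate (m - 1) 1) ++ (2 :: X) := by
  induction l generalizing X with
  | nil => rfl
  | cons c l ih =>
    simp only [List.flatMap_cons, List.append_assoc, List.singleton_append,
      List.nil_append, List.cons_append]
    rw [ih]

lemma rep_shift (b k t : ℕ) (hb : 1 ≤ b) :
    List.replicate b (1:ℕ) ++ (List.replicate k 1 ++ List.replicate t 2) =
      List.replicate (b - 1) 1 ++ (List.replicate (k + 1) 1 ++ List.replicate t 2) := by
  rw [← List.append_assoc, ← List.append_assoc, ← List.replicate_add, ← List.replicate_add,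
    show b + k = b - 1 + (k + 1) by omega]

lemma Phi2_nil : Phi2 [] = [] := rfl
lemma Psi_nil : Psi [] = [] := rfl
lemma Gamma_nil : Gamma [] = [] := rfl

lemma Phi2_eq_Psi_phi_W (ms : List ℕ) (t : ℕ) (hc : Cond ms t) :
    Phi2 (Wrd ms t) = Psi (phi (Wrd ms t)) := by
  rw [phi_Wrd ms t hc, Phi2_Wrd ms t hc, Psi_Wrd _ t (phiMs_cond ms t hc)]
  rcases list_cases3 ms with rfl | ⟨a, rfl⟩ | ⟨a, mid, b, rfl⟩
  · exact absurd rfl hc.1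
  · simp [phiMs_singleton]
  · rw [phiMs_concat]
    have hlen : ((b - 1) :: (mid.reverse ++ [a + 1])).length = (a :: (mid ++ [b])).length := by
      simp
    rw [hlen]
    simp only [List.tail_cons, List.headD_cons, List.reverse_append, List.reverse_cons,
      List.reverse_nil, List.nil_append, List.singleton_append, List.flatMap_cons,
      List.flatMap_append, List.flatMap_cons, List.flatMap_nil, List.append_nil,
      List.append_assoc, List.cons_append, Nat.add_sub_cancel]
    congr 1
    rw [shift2]

lemma Gamma_eq_Psi_W (ms : List ℕ) (t : ℕ) (hc : Cond ms t) :
    Gamma (Wrd ms t) = Psi (Wrd ms t) := by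
  obtain ⟨hne, htail, ht, hsum⟩ := hc
  rw [Gamma, Psi_Wrd ms t ⟨hne, htail, ht, hsum⟩, blocks_Wrd ms t hne htail hsum]
  rcases list_cases3 ms with rfl | ⟨a, rfl⟩ | ⟨a, mid, b, rfl⟩
  · exact absurd rfl hne
  · simp [msns_singleton, gammaBlocks]
  · have hb : 1 ≤ b := htail b (by simp)
    obtain ⟨p, ps, hps⟩ := List.exists_cons_of_ne_nil (msns_ne_nil (mid ++ [b]) t (by simp))
    rw [msns_cons a (mid ++ [b]) t (by simp), hps]
    show List.replicate a 1
        ++ (p :: ps).dropLast.flatMap (fun q => 2 :: List.replicate (q.1 - 1) 1)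
        ++ (2 :: List.replicate ((p :: ps).getLastD (0,0)).1 1)
        ++ ((1 :: (p :: ps).map Prod.snd).dropLast.dropLast.flatMap
              (fun nj => List.replicate (nj - 1) 2 ++ [1])
            ++ List.replicate ((1 :: (p :: ps).map Prod.snd).dropLast.getLastD 0 - 1
                + (1 :: (p :: ps).map Prod.snd).getLastD 0) 2) = _
    rw [← hps]
    rw [msns_dropLast, msns_getLastD _ _ (by simp), msns_map_snd _ _ (by simp)]
    rw [List.dropLast_concat, List.getLastD_concat, flatMap_pair_one]
    have hns : (1 :: (List.replicate ((mid ++ [b]).length - 1) 1 ++ [t]))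
        = List.replicate ((mid ++ [b]).length) 1 ++ [t] := by
      have : (mid ++ [b]).length = ((mid ++ [b]).length - 1) + 1 := by simp
      rw [this]
      rw [List.replicate_succ]
      simp
    rw [hns, List.dropLast_concat, List.getLastD_concat]
    have hlen2 : (mid ++ [b]).length = mid.length + 1 := by simp
    rw [hlen2, dropLast_replicate_succ]
    have hgl : (List.replicate (mid.length + 1) (1:ℕ)).getLastD 0 = 1 := by
      rw [List.replicate_succ', List.getLastD_concat]
    rw [hgl]
    have hflat : (List.replicate mid.length (1:ℕ)).flatMap
        (fun nj => List.replicate (nj - 1) 2 ++ [1]) = List.replicate mid.length 1 := by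
      induction mid.length with
      | zero => rfl
      | succ k ih => rw [List.replicate_succ, List.flatMap_cons, ih]; simp [List.replicate_succ]
    rw [hflat]
    simp only [List.tail_cons, List.headD_cons, List.flatMap_append, List.flatMap_cons,
      List.flatMap_nil, List.append_nil, List.append_assoc, List.cons_append,
      List.length_append, List.length_cons, List.length_nil, Nat.sub_self,
      List.replicate_zero, List.nil_append]
    congr 2
    rw [show (0:ℕ) + t = t by omega,
      show mid.length + (0 + 1) + 1 - 1 = mid.length + 1 by omega,
      rep_shift b mid.length t hb]

lemma Phi2_eq_Psi_phi (n : ℕ) (w : List ℕ) (h : w ∈ GSet n) :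
    Phi2 w = Psi (phi w) := by
  rw [mem_GSet_iff] at h
  rcases h with ⟨rfl, rfl⟩ | ⟨ms, t, hc, rfl, _⟩
  · rw [Phi2_nil, phi_nil, Psi_nil]
  · exact Phi2_eq_Psi_phi_W ms t hc

lemma Gamma_eq_Psi (n : ℕ) (w : List ℕ) (h : w ∈ GSet n) : Gamma w = Psi w := by
  rw [mem_GSet_iff] at h
  rcases h with ⟨rfl, rfl⟩ | ⟨ms, t, hc, rfl, _⟩
  · rw [Gamma_nil, Psi_nil]
  · exact Gamma_eq_Psi_W ms t hc

end Stmt17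
namespace Stmt17

lemma des_nil : des [] = 0 := rfl

lemma des_cons_cons (a b : ℕ) (l : List ℕ) :
    des (a :: b :: l) = des (b :: l) + (if b < a then 1 else 0) := by
  simp [des, List.countP_cons]

lemma des_one_cons (l : List ℕ) (h : ∀ b ∈ l.head?, 1 ≤ b) : des (1 :: l) = des l := by
  cases l with
  | nil => rfl
  | cons b l' =>
    rw [des_cons_cons]
    have hb : 1 ≤ b := h b (by simp)
    rw [if_neg (by omega), Nat.add_zero]

lemma des_replicate_one (m : ℕ) (l : List ℕ) (h : ∀ b ∈ l.head?, 1 ≤ b) :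
    des (List.replicate m 1 ++ l) = des l := by
  induction m with
  | zero => simp
  | succ m ih =>
    rw [List.replicate_succ, List.cons_append, des_one_cons, ih]
    intro b hb
    cases m with
    | zero => exact h b (by simpa using hb)
    | succ m' => rw [List.replicate_succ, List.cons_append] at hb; simp at hb; omega

lemma des_replicate_two (t : ℕ) : des (List.replicate t 2) = 0 := by
  induction t with
  | zero => rfl
  | succ t ih =>
    cases t with
    | zero => rfl
    | succ t' =>
      rw [List.replicate_succ, List.replicate_succ, des_cons_cons,
        ← List.replicate_succ, if_neg (by omega)]
      rw [List.replicate_succ] at ih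
      exact ih

lemma des_Wrd (ms : List ℕ) (t : ℕ) (hne : ms ≠ []) (htail : ∀ m ∈ ms.tail, 1 ≤ m) :
    des (Wrd ms t) = ms.length - 1 := by
  induction ms with
  | nil => exact absurd rfl hne
  | cons m rest ih =>
    cases rest with
    | nil =>
      rw [Wrd_singleton, des_replicate_one, des_replicate_two]
      · simp
      · intro b hb
        cases t with
        | zero => simp at hb
        | succ t' => rw [List.replicate_succ] at hb; simp at hb; omega
    | cons b r =>
      have hb1 : 1 ≤ b := htail b (by simp)
      obtain ⟨v, hv⟩ := Wrd_head (b :: r) t (by simp) (by simpa using hb1)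
      rw [Wrd_cons _ _ _ (by simp), des_replicate_one, hv, des_cons_cons, ← hv]
      · rw [ih (by simp) (fun x hx => htail x
          (by simp only [List.tail_cons] at hx ⊢; exact List.mem_cons_of_mem _ hx))]
        rw [if_pos (by omega)]
        simp
      · simp

lemma flat_count1 (l : List ℕ) :
    (l.flatMap fun m => List.replicate (m - 1) 1 ++ [2]).count 1 = (l.map (· - 1)).sum := by
  induction l with
  | nil => rfl
  | cons c l ih => simp [List.count_append, ih, List.count_replicate]

lemma flat_count2 (l : List ℕ) :
    (l.flatMap fun m => List.replicate (m - 1) 1 ++ [2]).count 2 = l.length := by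
  induction l with
  | nil => rfl
  | cons c l ih =>
    simp [List.count_append, ih, List.count_replicate]

lemma flat_length (l : List ℕ) :
    (l.flatMap fun m => List.replicate (m - 1) 1 ++ [2]).length
      = (l.map (· - 1)).sum + l.length := by
  induction l with
  | nil => rfl
  | cons c l ih => simp [ih]; omega

lemma exc_Phi2_Wrd (ms : List ℕ) (t : ℕ) (hc : Cond ms t) :
    exc (Phi2 (Wrd ms t)) = ms.length - 1 := by
  rw [Phi2_Wrd ms t hc]
  set F := ms.tail.reverse.flatMap fun m => List.replicate (m - 1) 1 ++ [2] with hF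
  set h := ms.headD 0 with hh
  set d := ms.length - 1 with hd
  have reshape : F ++ List.replicate h 1 ++ List.replicate d 1 ++ List.replicate t 2
      = (F ++ List.replicate h 1) ++ (List.replicate d 1 ++ List.replicate t 2) :=
    List.append_assoc _ _ _
  rw [reshape, exc]
  have hc1 : ((F ++ List.replicate h 1) ++ (List.replicate d 1 ++ List.replicate t 2)).count 1
      = (F ++ List.replicate h 1).length := by
    simp only [List.count_append, List.length_append, List.length_replicate]
    rw [hF, flat_count1, flat_length]
    simp [List.count_replicate]
    omega
  rw [hc1, List.take_left]
  simp only [List.count_append]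
  rw [hF, flat_count2]
  simp [List.count_replicate, hd]

lemma exc_Phi2 (n : ℕ) (w : List ℕ) (hw : w ∈ GSet n) : exc (Phi2 w) = des w := by
  rw [mem_GSet_iff] at hw
  rcases hw with ⟨rfl, rfl⟩ | ⟨ms, t, hc, rfl, _⟩
  · rfl
  · rw [exc_Phi2_Wrd ms t hc, des_Wrd ms t hc.1 hc.2.1]

end Stmt17
namespace Stmt17

lemma replicate_ne_cons_inj (x y : ℕ) (hxy : x ≠ y) :
    ∀ (b b' : ℕ) (u u' : List ℕ),
      List.replicate b x ++ y :: u = List.replicate b' x ++ y :: u' → b = b' ∧ u = u' := by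
  intro b
  induction b with
  | zero =>
    intro b' u u' h
    cases b' with
    | zero => simpa using h
    | succ b' =>
      rw [List.replicate_succ] at h
      simp at h
      exact (hxy h.1.symm).elim
  | succ b ih =>
    intro b' u u' h
    cases b' with
    | zero =>
      rw [List.replicate_succ] at h
      simp at h
      exact (hxy h.1).elim
    | succ b' =>
      rw [List.replicate_succ, List.replicate_succ] at h
      simp only [List.cons_append, List.cons.injEq] at h
      obtain ⟨h1, h2⟩ := ih b' u u' h.2
      exact ⟨by omega, h2⟩

lemma replicate_head_inj (x : ℕ) :
    ∀ (b b' : ℕ) (u u' : List ℕ), (∀ c ∈ u.head?, c ≠ x) → (∀ c ∈ u'.head?, c ≠ x) →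
      List.replicate b x ++ u = List.replicate b' x ++ u' → b = b' ∧ u = u' := by
  intro b
  induction b with
  | zero =>
    intro b' u u' hu hu' h
    cases b' with
    | zero => simpa using h
    | succ b' =>
      rw [List.replicate_succ] at h
      simp only [List.replicate_zero, List.nil_append, List.cons_append] at h
      exact absurd rfl (hu x (by rw [h]; simp))
  | succ b ih =>
    intro b' u u' hu hu' h
    cases b' with
    | zero =>
      rw [List.replicate_succ, List.replicate_zero] at h
      simp only [List.nil_append, List.cons_append] at h
      exact absurd rfl (hu' x (by rw [← h]; simp))
    | succ b' =>
      rw [List.replicate_succ, List.replicate_succ] at h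
      simp only [List.cons_append, List.cons.injEq, true_and] at h
      obtain ⟨h1, h2⟩ := ih b' u u' hu hu' h
      exact ⟨by omega, h2⟩

lemma strip_two (t t' : ℕ) (P P' : List ℕ)
    (hP : ∀ c ∈ P.getLast?, c ≠ 2) (hP' : ∀ c ∈ P'.getLast?, c ≠ 2)
    (h : P ++ List.replicate t 2 = P' ++ List.replicate t' 2) : P = P' ∧ t = t' := by
  have hrev := congrArg List.reverse h
  rw [List.reverse_append, List.reverse_append, List.reverse_replicate,
    List.reverse_replicate] at hrev
  have := replicate_head_inj 2 t t' P.reverse P'.reverse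
    (by intro c hc; apply hP; rwa [← List.head?_reverse]) 
    (by intro c hc; apply hP'; rwa [← List.head?_reverse]) hrev
  exact ⟨List.reverse_injective this.2, this.1⟩

lemma flat_inj :
    ∀ (l l' : List ℕ) (x x' : ℕ), (∀ m ∈ l, 1 ≤ m) → (∀ m ∈ l', 1 ≤ m) →
      (l.flatMap fun m => List.replicate (m - 1) 1 ++ [2]) ++ List.replicate x 1
        = (l'.flatMap fun m => List.replicate (m - 1) 1 ++ [2]) ++ List.replicate x' 1 →
      l = l' ∧ x = x' := by
  intro l
  induction l with
  | nil =>
    intro l' x x' _ h2 h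
    cases l' with
    | nil =>
      refine ⟨rfl, ?_⟩
      have := congrArg List.length h
      simpa using this
    | cons c' l'' =>
      exfalso
      simp only [List.flatMap_nil, List.nil_append] at h
      have h2mem : (2 : ℕ) ∈ List.replicate x 1 := by
        rw [h]
        exact List.mem_append_left _ (List.mem_flatMap.mpr ⟨c', by simp, by simp⟩)
      have := List.eq_of_mem_replicate h2mem
      omega
  | cons c l ih =>
    intro l' x x' h1 h2 h
    cases l' with
    | nil =>
      exfalso
      simp only [List.flatMap_nil, List.nil_append] at h
      have h2mem : (2 : ℕ) ∈ List.replicate x' 1 := by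
        rw [← h]
        exact List.mem_append_left _ (List.mem_flatMap.mpr ⟨c, by simp, by simp⟩)
      have := List.eq_of_mem_replicate h2mem
      omega
    | cons c' l'' =>
      simp only [List.flatMap_cons, List.append_assoc, List.singleton_append] at h
      obtain ⟨hc, hrest⟩ := replicate_ne_cons_inj 1 2 (by omega) _ _ _ _ h
      have hcc : c = c' := by
        have := h1 c (by simp)
        have := h2 c' (by simp)
        omega
      obtain ⟨hl, hx⟩ := ih l'' x x' (fun m hm => h1 m (by simp [hm]))
        (fun m hm => h2 m (by simp [hm])) hrest
      exact ⟨by rw [hcc, hl], hx⟩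

lemma getLast_P_ne2 (ms : List ℕ) (hne : ms ≠ []) :
    ∀ c ∈ ((ms.tail.reverse.flatMap fun m => List.replicate (m - 1) 1 ++ [2])
        ++ List.replicate (ms.headD 0 + (ms.length - 1)) 1).getLast?, c ≠ 2 := by
  intro c hc
  rcases Nat.eq_zero_or_pos (ms.headD 0 + (ms.length - 1)) with h0 | hpos
  · obtain ⟨m, rest, rfl⟩ := List.exists_cons_of_ne_nil hne
    have hrest : rest = [] := by
      simp only [List.headD_cons, List.length_cons] at h0
      exact List.eq_nil_of_length_eq_zero (by omega)
    subst hrest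
    have hm0 : m = 0 := by simpa using h0
    subst hm0
    simp at hc
  · obtain ⟨k, hk⟩ : ∃ k, ms.headD 0 + (ms.length - 1) = k + 1 :=
      ⟨ms.headD 0 + (ms.length - 1) - 1, by omega⟩
    rw [hk] at hc
    rw [List.getLast?_append_of_ne_nil _ (by simp)] at hc
    rw [List.replicate_succ', List.getLast?_concat] at hc
    simp at hc
    omega

lemma Phi2_W_inj (ms ms' : List ℕ) (t t' : ℕ) (hc : Cond ms t) (hc' : Cond ms' t')
    (h : Phi2 (Wrd ms t) = Phi2 (Wrd ms' t')) : ms = ms' ∧ t = t' := by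
  rw [Phi2_Wrd ms t hc, Phi2_Wrd ms' t' hc'] at h
  have reshape : ∀ (F : List ℕ) (a d u : ℕ),
      F ++ List.replicate a 1 ++ List.replicate d 1 ++ List.replicate u 2
        = (F ++ List.replicate (a + d) 1) ++ List.replicate u 2 := by
    intro F a d u
    rw [List.replicate_add]
    simp [List.append_assoc]
  rw [reshape, reshape] at h
  obtain ⟨hP, ht⟩ := strip_two t t' _ _ (getLast_P_ne2 ms hc.1) (getLast_P_ne2 ms' hc'.1) h
  obtain ⟨hl, hx⟩ := flat_inj ms.tail.reverse ms'.tail.reverse _ _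
    (fun m hm => hc.2.1 m (by simpa using hm))
    (fun m hm => hc'.2.1 m (by simpa using hm)) hP
  have htails : ms.tail = ms'.tail := List.reverse_injective hl
  have hlens : ms.length = ms'.length := by
    obtain ⟨a, r, rfl⟩ := List.exists_cons_of_ne_nil hc.1
    obtain ⟨a', r', rfl⟩ := List.exists_cons_of_ne_nil hc'.1
    simp only [List.tail_cons] at htails
    simp [htails]
  have hheads : ms.headD 0 = ms'.headD 0 := by omega
  obtain ⟨a, r, rfl⟩ := List.exists_cons_of_ne_nil hc.1
  obtain ⟨a', r', rfl⟩ := List.exists_cons_of_ne_nil hc'.1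
  simp only [List.tail_cons] at htails
  simp only [List.headD_cons] at hheads
  exact ⟨by rw [hheads, htails], ht⟩

lemma sum_sub_one (r : List ℕ) (h : ∀ m ∈ r, 1 ≤ m) :
    (r.map (· - 1)).sum + r.length = r.sum := by
  induction r with
  | nil => rfl
  | cons c r ih =>
    have hc : 1 ≤ c := h c (by simp)
    have := ih (fun m hm => h m (by simp [hm]))
    simp only [List.map_cons, List.sum_cons, List.length_cons]
    omega

lemma Phi2_W_length (ms : List ℕ) (t : ℕ) (hc : Cond ms t) :
    (Phi2 (Wrd ms t)).length = ms.sum + (ms.length - 1) + t := by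
  rw [Phi2_Wrd ms t hc]
  obtain ⟨a, r, rfl⟩ := List.exists_cons_of_ne_nil hc.1
  have hs := sum_sub_one r (fun m hm => hc.2.1 m (by simpa using hm))
  simp only [List.length_append, List.length_replicate, flat_length, List.tail_cons,
    List.map_reverse, List.sum_reverse, List.length_reverse, List.headD_cons,
    List.length_cons, List.sum_cons]
  omega

lemma Phi2_W_ne_nil (ms : List ℕ) (t : ℕ) (hc : Cond ms t) : Phi2 (Wrd ms t) ≠ [] := by
  intro h
  have := Phi2_W_length ms t hc
  rw [h] at this
  simp at this
  obtain ⟨hne, htail, _, hsum⟩ := hc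
  omega

lemma Phi2_injOn (n : ℕ) : Set.InjOn Phi2 (GSet n) := by
  intro w hw w' hw' heq
  rw [mem_GSet_iff] at hw hw'
  rcases hw with ⟨rfl, rfl⟩ | ⟨ms, t, hc, rfl, hn⟩
  · rcases hw' with ⟨rfl, _⟩ | ⟨ms', t', hc', rfl, hn'⟩
    · rfl
    · exact absurd heq.symm (by rw [Phi2_nil]; exact Phi2_W_ne_nil ms' t' hc')
  · rcases hw' with ⟨rfl, hn0⟩ | ⟨ms', t', hc', rfl, hn'⟩
    · exact absurd heq (by rw [Phi2_nil]; exact Phi2_W_ne_nil ms t hc)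
    · obtain ⟨h1, h2⟩ := Phi2_W_inj ms ms' t t' hc hc' heq
      rw [h1, h2]

end Stmt17

theorem stmt_17 (n : ℕ) :
    phi '' GSet n = GSet n ∧
      Phi2 '' GSet n = Psi '' GSet n ∧ Psi '' GSet n = Gamma '' GSet n ∧
      ∀ k, {w ∈ GSet n | des w = k}.ncard =
        {w ∈ Phi2 '' GSet n | exc w = k}.ncard := by
  refine ⟨Stmt17.phi_image n, ?_, ?_, ?_⟩
  · calc Phi2 '' GSet n = (fun w => Psi (phi w)) '' GSet n :=
          Set.image_congr (fun w hw => Stmt17.Phi2_eq_Psi_phi n w hw)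
      _ = Psi '' (phi '' GSet n) := by rw [Set.image_image]
      _ = Psi '' GSet n := by rw [Stmt17.phi_image n]
  · exact Set.image_congr (fun w hw => (Stmt17.Gamma_eq_Psi n w hw).symm)
  · intro k
    have hset : {w ∈ Phi2 '' GSet n | exc w = k} = Phi2 '' {w ∈ GSet n | des w = k} := by
      ext u
      constructor
      · rintro ⟨⟨w, hw, rfl⟩, hexc⟩
        exact ⟨w, ⟨hw, by rw [← Stmt17.exc_Phi2 n w hw]; exact hexc⟩, rfl⟩
      · rintro ⟨w, ⟨hw, hdes⟩, rfl⟩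
        exact ⟨⟨w, hw, rfl⟩, by rw [Stmt17.exc_Phi2 n w hw, hdes]⟩
    rw [hset, Set.ncard_image_of_injOn ((Stmt17.Phi2_injOn n).mono (Set.sep_subset _ _))]
end
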